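/- With eₙ the number of critical points of fⁿ and sᵢ the number of interior simple zeros of fⁱ(x) − x_c, one has eₙ = 1 + Σ_{i=1}^{n-1} sᵢ for every n ≥ 1. -/

import Mathlib

open Set

theorem extrema_count_eq_sum_of_simple_zeros
    (a b x_c : ℝ) (f : ℝ → ℝ) (hab : a < b)
    (hmap : Set.MapsTo f (Set.Icc a b) (Set.Icc a b))
    (hf : ContDiff ℝ 2 f)
    (hxc : x_c ∈ Set.Ioo a b)
    (h2 : deriv (deriv f) x_c < 0)
    (hup : ∀ x ∈ Set.Ico a x_c, 0 < deriv f x)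
    (hdn : ∀ x ∈ Set.Ioc x_c b, deriv f x < 0)
    (hfin : ∀ n : ℕ, 1 ≤ n → {x ∈ Ioo a b | deriv (f^[n]) x = 0}.Finite) :
    ∀ n : ℕ, 1 ≤ n →
      {x ∈ Ioo a b | deriv (f^[n]) x = 0}.ncard =
        1 + ∑ i ∈ Finset.Ico 1 n,
          {x ∈ Ioo a b | f^[i] x = x_c ∧ (∀ j : ℕ, j < i → f^[j] x ≠ x_c) ∧
            deriv (f^[i]) x ≠ 0}.ncard := by
  have hdiff : Differentiable ℝ f := hf.differentiable (by norm_num)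
  have hcd : Continuous (deriv f) := hf.continuous_deriv (by norm_num)
  -- deriv f x_c = 0
  have hcd0 : deriv f x_c = 0 := by
    have hge : 0 ≤ deriv f x_c := by
      have ht : Filter.Tendsto (deriv f) (nhdsWithin x_c (Iio x_c)) (nhds (deriv f x_c)) :=
        (hcd.continuousAt).continuousWithinAt
      refine ge_of_tendsto ht ?_
      filter_upwards [Ico_mem_nhdsLT_of_mem (⟨hxc.1, le_rfl⟩ : x_c ∈ Ioc a x_c)] with y hy
      exact (hup y hy).le
    have hle : deriv f x_c ≤ 0 := by
      have ht : Filter.Tendsto (deriv f) (nhdsWithin x_c (Ioi x_c)) (nhds (deriv f x_c)) :=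
        (hcd.continuousAt).continuousWithinAt
      refine le_of_tendsto ht ?_
      filter_upwards [Ioc_mem_nhdsGT_of_mem (⟨le_rfl, hxc.2⟩ : x_c ∈ Ico x_c b)] with y hy
      exact (hdn y hy).le
    linarith
  have hzero : ∀ y ∈ Icc a b, (deriv f y = 0 ↔ y = x_c) := by
    intro y hy
    constructor
    · intro h
      rcases lt_trichotomy y x_c with hlt | heq | hgt
      · exact absurd h (ne_of_gt (hup y ⟨hy.1, hlt⟩))
      · exact heq
      · exact absurd h (ne_of_lt (hdn y ⟨hgt, hy.2⟩))
    · intro h; rw [h]; exact hcd0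
  have hdiffn : ∀ n : ℕ, Differentiable ℝ (f^[n]) := fun n => hdiff.iterate n
  have hchain : ∀ (n : ℕ) (x : ℝ),
      deriv (f^[n + 1]) x = deriv f (f^[n] x) * deriv (f^[n]) x := by
    intro n x
    rw [Function.iterate_succ']
    exact deriv_comp x (hdiff _) ((hdiffn n) x)
  have hmapsn : ∀ j : ℕ, MapsTo (f^[j]) (Icc a b) (Icc a b) := fun j => hmap.iterate j
  have key : ∀ n : ℕ, ∀ x ∈ Icc a b,
      (deriv (f^[n]) x = 0 ↔ ∃ j < n, f^[j] x = x_c) := by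
    intro n
    induction n with
    | zero =>
      intro x hx
      simp [Function.iterate_zero, deriv_id']
    | succ n ih =>
      intro x hx
      rw [hchain n x, mul_eq_zero]
      constructor
      · rintro (h | h)
        · exact ⟨n, Nat.lt_succ_self n, (hzero _ (hmapsn n hx)).mp h⟩
        · obtain ⟨j, hj, hjx⟩ := (ih x hx).mp h
          exact ⟨j, hj.trans (Nat.lt_succ_self n), hjx⟩
      · rintro ⟨j, hj, hjx⟩
        rcases Nat.lt_succ_iff_lt_or_eq.mp hj with hj' | rfl
        · exact Or.inr ((ih x hx).mpr ⟨j, hj', hjx⟩)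
        · exact Or.inl ((hzero _ (hmapsn j hx)).mpr hjx)
  -- main induction
  intro n hn
  induction n, hn using Nat.le_induction with
  | base =>
    have hE1 : {x ∈ Ioo a b | deriv (f^[1]) x = 0} = {x_c} := by
      ext x
      simp only [mem_setOf_eq, mem_singleton_iff]
      constructor
      · rintro ⟨hx, hd⟩
        obtain ⟨j, hj, hjx⟩ := (key 1 x (Ioo_subset_Icc_self hx)).mp hd
        interval_cases j
        simpa using hjx
      · rintro rfl
        exact ⟨hxc, (key 1 _ (Ioo_subset_Icc_self hxc)).mpr ⟨0, Nat.zero_lt_one, rfl⟩⟩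
    rw [hE1]
    simp
  | succ n hn ih =>
    have hsplit : {x ∈ Ioo a b | deriv (f^[n + 1]) x = 0} =
        {x ∈ Ioo a b | deriv (f^[n]) x = 0} ∪
        {x ∈ Ioo a b | f^[n] x = x_c ∧ (∀ j : ℕ, j < n → f^[j] x ≠ x_c) ∧
            deriv (f^[n]) x ≠ 0} := by
      ext x
      simp only [mem_setOf_eq, mem_union]
      constructor
      · rintro ⟨hx, hd⟩
        have hx' := Ioo_subset_Icc_self hx
        obtain ⟨j, hj, hjx⟩ := (key (n + 1) x hx').mp hd
        by_cases hall : ∃ j < n, f^[j] x = x_c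
        · exact Or.inl ⟨hx, (key n x hx').mpr hall⟩
        · push_neg at hall
          have hjn : j = n := by
            rcases Nat.lt_succ_iff_lt_or_eq.mp hj with h' | h'
            · exact absurd hjx (hall j h')
            · exact h'
          rw [hjn] at hjx
          refine Or.inr ⟨hx, hjx, hall, ?_⟩
          intro h0
          obtain ⟨k, hk, hkx⟩ := (key n x hx').mp h0
          exact hall k hk hkx
      · rintro (⟨hx, hd⟩ | ⟨hx, h1, _, _⟩)
        · have hx' := Ioo_subset_Icc_self hx
          obtain ⟨j, hj, hjx⟩ := (key n x hx').mp hd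
          exact ⟨hx, (key (n + 1) x hx').mpr ⟨j, hj.trans (Nat.lt_succ_self n), hjx⟩⟩
        · exact ⟨hx, (key (n + 1) x (Ioo_subset_Icc_self hx)).mpr
            ⟨n, Nat.lt_succ_self n, h1⟩⟩
    have hdisj : Disjoint {x ∈ Ioo a b | deriv (f^[n]) x = 0}
        {x ∈ Ioo a b | f^[n] x = x_c ∧ (∀ j : ℕ, j < n → f^[j] x ≠ x_c) ∧
            deriv (f^[n]) x ≠ 0} := by
      rw [Set.disjoint_left]
      rintro x ⟨hx, hd⟩ ⟨_, _, _, hnd⟩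
      exact hnd hd
    have hfinS : {x ∈ Ioo a b | f^[n] x = x_c ∧ (∀ j : ℕ, j < n → f^[j] x ≠ x_c) ∧
        deriv (f^[n]) x ≠ 0}.Finite := by
      refine (hfin (n + 1) (by omega)).subset ?_
      rw [hsplit]; exact subset_union_right
    rw [hsplit, Set.ncard_union_eq hdisj (hfin n hn) hfinS, ih,
      Finset.sum_Ico_succ_top hn]
    ring
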